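/- For every pair of coprime positive integers a, b, the primitive lower Christoffel word w_{a,b} is the lexicographically greatest word among all Lyndon words over {0,1} (with 0 < 1) having Parikh vector (a,b). -/

import Mathlib

/-- A word is primitive if it is not a proper power: `w = v^n` implies `n = 1`. -/
def Primitive {α : Type*} (w : List α) : Prop :=
  ∀ (v : List α) (n : ℕ), w = (List.replicate n v).flatten → n = 1

/-- A Lyndon word: nonempty and lexicographically strictly smaller than all
its proper nonempty suffixes. -/
def Lyndon {α : Type*} [LinearOrder α] (w : List α) : Prop :=
  w ≠ [] ∧ ∀ u v : List α, w = u ++ v → u ≠ [] → v ≠ [] → List.Lex (· < ·) w v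

/-- A Lyndon word for the reversed order `1 < 0` on `Bool`. -/
def LyndonRev (w : List Bool) : Prop :=
  w ≠ [] ∧ ∀ u v : List Bool, w = u ++ v → u ≠ [] → v ≠ [] → List.Lex (· > ·) w v

/-- A binary word is balanced if the numbers of `1`s in any two factors of the
same length differ by at most 1. (`false` plays the role of `0`, `true` of `1`.) -/
def Balanced01 (w : List Bool) : Prop :=
  ∀ u v : List Bool, u <:+: w → v <:+: w → u.length = v.length →
    (u.count true : ℤ) - (v.count true : ℤ) ≤ 1

/-- `w` has period `p`: `w[i] = w[i+p]` for all valid indices. -/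
def HasPeriod (w : List Bool) (p : ℕ) : Prop :=
  ∀ i : ℕ, i + p < w.length → w[i]? = w[i + p]?

/-- A central word: it has coprime periods `p`, `q` and length `p + q - 2`. -/
def Central (w : List Bool) : Prop :=
  ∃ p q : ℕ, Nat.Coprime p q ∧ HasPeriod w p ∧ HasPeriod w q ∧ w.length + 2 = p + q

/-- The lower Christoffel word of slope `b/a`: letter `i` is `1` (`true`) iff the
line `y = bx/(a+b)`... encoded via floor differences `⌊(i+1)b/(a+b)⌋ - ⌊ib/(a+b)⌋`. -/
def chr (a b : ℕ) : List Bool :=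
  List.ofFn (fun i : Fin (a + b) =>
    decide ((i : ℕ) * b / (a + b) < ((i : ℕ) + 1) * b / (a + b)))

/-- An (upward) digitally convex word: all factors of its Lyndon factorization
(for the order `0 < 1`) are balanced Lyndon words, i.e. primitive lower
Christoffel words. -/
def DC (w : List Bool) : Prop :=
  ∃ L : List (List Bool), L.flatten = w ∧ (∀ x ∈ L, Lyndon x ∧ Balanced01 x) ∧
    L.Chain' (fun a b => ¬ List.Lex (· < ·) a b)

/-- A downward digitally convex word: all factors of its Lyndon factorization
for the order `1 < 0` are balanced. -/
def DCdown (w : List Bool) : Prop :=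
  ∃ L : List (List Bool), L.flatten = w ∧ (∀ x ∈ L, LyndonRev x ∧ Balanced01 x) ∧
    L.Chain' (fun a b => ¬ List.Lex (· > ·) a b)

/-- `(u, v)` is the standard factorization of `u ++ v`: both parts nonempty and
`v` is the lexicographically least proper nonempty suffix of `u ++ v`. -/
def StdFact (u v : List Bool) : Prop :=
  u ≠ [] ∧ v ≠ [] ∧
    ∀ s : List Bool, s ≠ [] → s ≠ u ++ v → s <:+ u ++ v →
      s = v ∨ List.Lex (· < ·) v s

/-- A word is unbordered if it has no nonempty proper border. -/
def Unbordered (w : List Bool) : Prop :=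
  ∀ u : List Bool, u <+: w → u <:+ w → u ≠ w → u = []


namespace Stmt8Aux

/-- counts of a boolean list add to the length -/
lemma count_fb (l : List Bool) : l.count false + l.count true = l.length := by
  induction l with
  | nil => simp
  | cons x xs ih => cases x <;> simp [List.count_cons] <;> omega

lemma lex_append_mid : ∀ (c : List Bool) (s t : List Bool),
    List.Lex (· < ·) (c ++ false :: s) (c ++ true :: t) := by
  intro c
  induction c with
  | nil => intro s t; exact List.Lex.rel (by simp)
  | cons x xs ih => intro s t; exact List.Lex.cons (ih s t)

lemma lex_mid {l₁ l₂ : List Bool} {i : ℕ} (h₁ : i < l₁.length) (h₂ : i < l₂.length)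
    (ht : l₁.take i = l₂.take i) (hx : l₁[i] = false) (hy : l₂[i] = true) :
    List.Lex (· < ·) l₁ l₂ := by
  have e₁ : l₁ = l₁.take i ++ false :: l₁.drop (i+1) := by
    conv_lhs => rw [← List.take_append_drop i l₁]
    rw [List.drop_eq_getElem_cons h₁, hx]
  have e₂ : l₂ = l₂.take i ++ true :: l₂.drop (i+1) := by
    conv_lhs => rw [← List.take_append_drop i l₂]
    rw [List.drop_eq_getElem_cons h₂, hy]
  rw [e₁, e₂, ← ht]
  exact lex_append_mid _ _ _

section Chr

variable {a b : ℕ} (ha : 0 < a) (hb : 0 < b)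

omit ha hb in
lemma key_eq (i : ℕ) : (i + 1) * b = (a+b) * (i * b / (a+b)) + (i * b % (a+b) + b) := by
  have hdm := Nat.div_add_mod (i * b) (a+b)
  rw [add_mul, one_mul]
  omega

include ha hb

lemma div_lt_iff (i : ℕ) :
    i * b / (a + b) < (i + 1) * b / (a + b) ↔ a ≤ i * b % (a + b) := by
  have hn0 : 0 < a + b := by omega
  rw [key_eq, Nat.mul_add_div hn0]
  have hr : i * b % (a+b) < a+b := Nat.mod_lt _ hn0
  constructor
  · intro h
    have h2 : 0 < (i * b % (a+b) + b) / (a+b) := by omega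
    have := Nat.div_pos_iff.mp h2
    omega
  · intro h
    have : 0 < (i * b % (a+b) + b) / (a+b) := Nat.div_pos_iff.mpr ⟨by omega, by omega⟩
    omega

lemma div_succ (i : ℕ) :
    (i + 1) * b / (a + b) = i * b / (a + b) + (if a ≤ i * b % (a + b) then 1 else 0) := by
  have hn0 : 0 < a + b := by omega
  rw [key_eq, Nat.mul_add_div hn0]
  have hr : i * b % (a+b) < a+b := Nat.mod_lt _ hn0
  rcases le_or_gt a (i * b % (a+b)) with h | h
  · rw [if_pos h]
    have : (i * b % (a+b) + b) / (a+b) = 1 :=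
      Nat.div_eq_of_lt_le (by omega) (by omega)
    omega
  · rw [if_neg (by omega)]
    have : (i * b % (a+b) + b) / (a+b) = 0 := Nat.div_eq_of_lt (by omega)
    omega

lemma mod_succ (i : ℕ) :
    (i + 1) * b % (a + b) =
      if a ≤ i * b % (a + b) then i * b % (a + b) + b - (a + b) else i * b % (a + b) + b := by
  have hn0 : 0 < a + b := by omega
  have hr : i * b % (a+b) < a+b := Nat.mod_lt _ hn0
  have h1 : (i + 1) * b % (a+b) = (i * b % (a+b) + b) % (a+b) := by
    conv_lhs => rw [add_mul, one_mul, Nat.add_mod,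
      Nat.mod_eq_of_lt (show b < a+b by omega)]
  rw [h1]
  rcases le_or_gt a (i * b % (a+b)) with h | h
  · rw [if_pos h, Nat.mod_eq_sub_mod (by omega), Nat.mod_eq_of_lt (by omega)]
  · rw [if_neg (by omega), Nat.mod_eq_of_lt (by omega)]

omit ha hb in
lemma chr_length : (chr a b).length = a + b := by simp [chr]

lemma chr_getElem (i : ℕ) (h : i < (chr a b).length) :
    (chr a b)[i] = decide (a ≤ i * b % (a + b)) := by
  simp only [chr, List.getElem_ofFn]
  exact decide_eq_decide.mpr (div_lt_iff ha hb i)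

lemma chr_take_count : ∀ i, i ≤ a + b →
    ((chr a b).take i).count true = i * b / (a + b) := by
  intro i
  induction i with
  | zero => simp
  | succ i ih =>
    intro hi
    have hi' : i < (chr a b).length := by rw [chr_length]; omega
    rw [List.take_succ, List.getElem?_eq_getElem hi', chr_getElem ha hb i hi']
    rw [List.count_append, ih (by omega), div_succ ha hb i]
    rcases le_or_gt a (i * b % (a + b)) with h | h
    · rw [if_pos h]; simp [h]
    · rw [if_neg (by omega)]; simp [Nat.not_le.mpr h]

lemma chr_count_true : (chr a b).count true = b := by
  have := chr_take_count ha hb (a + b) le_rfl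
  rw [List.take_of_length_le (by rw [chr_length])] at this
  rw [this, Nat.mul_div_cancel_left _ (show 0 < a + b by omega)]

lemma chr_count_false : (chr a b).count false = a := by
  have h1 := count_fb (chr a b)
  rw [chr_count_true ha hb, chr_length] at h1
  omega

end Chr

section Lyndon

variable {a b : ℕ} (ha : 0 < a) (hb : 0 < b)

include ha hb

/-- The shift-invariant: while letters agree, the modular offset stays constant. -/
lemma shift_inv (j : ℕ) :
    ∀ i, (∀ i' < i, (a ≤ i' * b % (a + b) ↔ a ≤ (j + i') * b % (a + b))) →
      (j + i) * b % (a + b) = i * b % (a + b) + j * b % (a + b) := by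
  intro i
  induction i with
  | zero => simp
  | succ i ih =>
    intro hag
    have hih := ih (fun i' hi' => hag i' (by omega))
    have hiff := hag i (by omega)
    have hr : i * b % (a+b) < a+b := Nat.mod_lt _ (by omega)
    have hrj : (j + i) * b % (a+b) < a+b := Nat.mod_lt _ (by omega)
    have h1 := mod_succ ha hb i
    have h2 := mod_succ ha hb (j + i)
    rw [show j + (i+1) = (j+i) + 1 by omega, h2, hih, h1]
    rcases le_or_gt a (i * b % (a+b)) with h | h
    · rw [if_pos (le_trans h (Nat.le_add_right _ _)), if_pos h]
      omega
    · have h' : ¬ a ≤ i * b % (a+b) + j * b % (a+b) := by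
        rw [← hih]; omega
      rw [if_neg h', if_neg (by omega)]
      omega

lemma chr_suffix_lex (hab : Nat.Coprime a b) (j : ℕ) (hj0 : 0 < j) (hjn : j < a + b) :
    List.Lex (· < ·) (chr a b) ((chr a b).drop j) := by
  have hn0 : 0 < a + b := by omega
  have hcop : Nat.Coprime (a + b) b := Nat.coprime_add_self_left.mpr hab
  have hc : 0 < j * b % (a + b) := by
    rcases Nat.eq_zero_or_pos (j * b % (a + b)) with h | h
    · exfalso
      have hdvd : (a + b) ∣ j * b := Nat.dvd_of_mod_eq_zero h
      have h2 := Nat.Coprime.dvd_of_dvd_mul_right hcop hdvd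
      have := Nat.le_of_dvd hj0 h2
      omega
    · exact h
  -- there is a disagreement before (a+b) - j
  have hex : ∃ i, i < (a + b) - j ∧ ¬ (a ≤ i * b % (a + b) ↔ a ≤ (j + i) * b % (a + b)) := by
    by_contra hcon
    push_neg at hcon
    have := shift_inv ha hb j ((a + b) - j) hcon
    rw [show j + ((a + b) - j) = a + b by omega] at this
    rw [Nat.mul_mod_right] at this
    omega
  classical
  have hexE : ∃ i, ¬ (a ≤ i * b % (a + b) ↔ a ≤ (j + i) * b % (a + b)) :=
    ⟨hex.choose, hex.choose_spec.2⟩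
  set i0 := Nat.find hexE with hi0def
  have hP0 : ¬ (a ≤ i0 * b % (a + b) ↔ a ≤ (j + i0) * b % (a + b)) := Nat.find_spec hexE
  have hi0lt : i0 < (a + b) - j :=
    lt_of_le_of_lt (Nat.find_min' hexE hex.choose_spec.2) hex.choose_spec.1
  have hag : ∀ i' < i0, (a ≤ i' * b % (a + b) ↔ a ≤ (j + i') * b % (a + b)) := by
    intro i' hi'
    by_contra hne
    exact Nat.find_min hexE hi' hne
  have hinv := shift_inv ha hb j i0 hag
  have hrj : (j + i0) * b % (a + b) < a + b := Nat.mod_lt _ hn0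
  have hx : i0 * b % (a + b) < a := by omega
  have hy : a ≤ (j + i0) * b % (a + b) := by omega
  have hlen : (chr a b).length = a + b := chr_length
  have hdlen : ((chr a b).drop j).length = (a + b) - j := by rw [List.length_drop, hlen]
  apply lex_mid (i := i0) (by omega) (by omega)
  · apply List.ext_getElem?
    intro m
    rw [List.getElem?_take, List.getElem?_take]
    by_cases hm : m < i0
    · rw [if_pos hm, if_pos hm]
      have hm1 : m < (chr a b).length := by omega
      have hm2 : m < ((chr a b).drop j).length := by omega
      rw [List.getElem?_eq_getElem hm1, List.getElem?_eq_getElem hm2]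
      congr 1
      rw [List.getElem_drop]
      rw [chr_getElem ha hb m hm1, chr_getElem ha hb (j + m) (by omega)]
      exact decide_eq_decide.mpr (hag m hm)
    · rw [if_neg hm, if_neg hm]
  · rw [chr_getElem ha hb i0 (by omega)]
    simpa using Nat.not_le.mpr hx
  · rw [List.getElem_drop, chr_getElem ha hb (j + i0) (by omega)]
    simpa using hy

lemma chr_lyndon (hab : Nat.Coprime a b) : Lyndon (chr a b) := by
  constructor
  · intro h
    have := chr_length (a := a) (b := b)
    rw [h] at this
    simp at this
    omega
  · intro u v huv hu hv
    have hjv : v = (chr a b).drop u.length := by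
      rw [huv, List.drop_left]
    have hlsum : u.length + v.length = a + b := by
      have := chr_length (a := a) (b := b)
      rw [huv, List.length_append] at this
      omega
    have hj0 : 0 < u.length := List.length_pos_iff.mpr hu
    have hjn : u.length < a + b := by
      have hv' : 0 < v.length := List.length_pos_iff.mpr hv
      omega
    rw [hjv]
    exact chr_suffix_lex ha hb hab u.length hj0 hjn

end Lyndon

section Max

variable {a b : ℕ} (ha : 0 < a) (hb : 0 < b)

include ha hb

/-- Any word of length `a+b` whose prefixes satisfy the density condition is `≤ chr a b`. -/
lemma le_chr (r : List Bool) (hlen : r.length = a + b)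
    (hcond : ∀ i ≤ a + b, (a + b) * ((r.take i).count true) ≤ i * b) :
    r = chr a b ∨ List.Lex (· < ·) r (chr a b) := by
  classical
  by_cases heq : r = chr a b
  · exact Or.inl heq
  right
  have hn0 : 0 < a + b := by omega
  have hclen : (chr a b).length = a + b := chr_length
  have hexE : ∃ i : ℕ, r[i]? ≠ (chr a b)[i]? := by
    by_contra hcon
    push_neg at hcon
    exact heq (List.ext_getElem? hcon)
  set i0 := Nat.find hexE with hi0def
  have hP0 : r[i0]? ≠ (chr a b)[i0]? := Nat.find_spec hexE
  have hag : ∀ i' < i0, r[i']? = (chr a b)[i']? := fun i' hi' => by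
    by_contra hne
    exact Nat.find_min hexE hi' hne
  have hi0 : i0 < a + b := by
    by_contra hge
    push_neg at hge
    exact hP0 (by rw [List.getElem?_eq_none (by omega), List.getElem?_eq_none (by omega)])
  have hir : i0 < r.length := by omega
  have hic : i0 < (chr a b).length := by omega
  have htake : r.take i0 = (chr a b).take i0 := by
    apply List.ext_getElem?
    intro m
    rw [List.getElem?_take, List.getElem?_take]
    by_cases hm : m < i0
    · rw [if_pos hm, if_pos hm]; exact hag m hm
    · rw [if_neg hm, if_neg hm]
  have hne : r[i0] ≠ (chr a b)[i0] := by
    intro h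
    exact hP0 (by rw [List.getElem?_eq_getElem hir, List.getElem?_eq_getElem hic, h])
  have hk : (r.take i0).count true = i0 * b / (a + b) := by
    rw [htake, chr_take_count ha hb i0 (by omega)]
  have hrfalse : r[i0] = false := by
    by_contra hrt
    have hrt : r[i0] = true := by
      cases h : r[i0] with
      | false => exact absurd h hrt
      | true => rfl
    have hsucc : (r.take (i0+1)).count true = i0 * b / (a + b) + 1 := by
      rw [List.take_succ, List.getElem?_eq_getElem hir, hrt, List.count_append, hk]
      simp
    have hc2 := hcond (i0 + 1) (by omega)
    rw [hsucc] at hc2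
    have hdivlt : i0 * b / (a + b) < (i0 + 1) * b / (a + b) := by
      have h3 : i0 * b / (a + b) + 1 ≤ (i0 + 1) * b / (a + b) := by
        rw [Nat.le_div_iff_mul_le hn0]
        calc (i0 * b / (a + b) + 1) * (a + b) = (a + b) * (i0 * b / (a + b) + 1) := by ring
        _ ≤ (i0 + 1) * b := hc2
      omega
    have : (chr a b)[i0] = true := by
      rw [chr_getElem ha hb i0 hic]
      simpa using (div_lt_iff ha hb i0).mp hdivlt
    exact hne (by rw [hrt, this])
  have hctrue : (chr a b)[i0] = true := by
    cases h : (chr a b)[i0] with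
    | true => rfl
    | false => exact absurd (by rw [hrfalse, h]) hne
  exact lex_mid hir hic htake hrfalse hctrue

omit ha hb in
/-- The cycle lemma: some rotation of `w` satisfies the prefix density condition. -/
lemma exists_rotation (hb : 0 < b) (w : List Bool) (hlen : w.length = a + b)
    (hct : w.count true = b) :
    ∃ j ≤ a + b, ∀ i ≤ a + b,
      (a + b) * (((w.drop j ++ w.take j).take i).count true) ≤ i * b := by
  classical
  set n := a + b with hn
  set T : ℕ → ℤ := fun i => (i * b : ℤ) - n * ((w.take i).count true) with hT
  obtain ⟨j, hjmem, hjmin⟩ :=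
    Finset.exists_min_image (Finset.range (n + 1)) T ⟨0, by simp⟩
  have hjle : j ≤ n := by have := Finset.mem_range.mp hjmem; omega
  refine ⟨j, hjle, ?_⟩
  intro i hi
  have hdlen : (w.drop j).length = n - j := by rw [List.length_drop, hlen]
  by_cases hcase : i ≤ n - j
  · -- within the dropped part
    have htk : (w.drop j ++ w.take j).take i = (w.drop j).take i := by
      rw [List.take_append, show i - (w.drop j).length = 0 by omega]
      simp
    have hsplit : w.take (j + i) = w.take j ++ (w.drop j).take i := List.take_add
    have hcnt : (w.take (j + i)).count true
        = (w.take j).count true + ((w.drop j).take i).count true := by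
      rw [hsplit, List.count_append]
    have hmin := hjmin (j + i) (Finset.mem_range.mpr (by omega))
    rw [hT] at hmin
    simp only at hmin
    rw [htk]
    have hgoal : ((n : ℤ)) * (((w.drop j).take i).count true) ≤ (i : ℤ) * b := by
      have hc' : ((w.take (j + i)).count true : ℤ)
          = ((w.take j).count true : ℤ) + (((w.drop j).take i).count true : ℤ) := by
        exact_mod_cast hcnt
      have hpush : ((j : ℤ) + i) * b = (j : ℤ) * b + (i : ℤ) * b := by ring
      push_cast at hmin
      nlinarith [hmin, hc']
    exact_mod_cast hgoal
  · -- wraps around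
    push_neg at hcase
    set m := i - (n - j) with hm
    have hmj : m ≤ j := by omega
    have htk : (w.drop j ++ w.take j).take i = w.drop j ++ w.take m := by
      rw [List.take_append,
        List.take_of_length_le (by omega), hdlen, show i - (n - j) = m from rfl,
        List.take_take, min_eq_left hmj]
    have hsplit := List.take_append_drop j w
    have hcnt : (w.take j).count true + (w.drop j).count true = b := by
      rw [← List.count_append, hsplit, hct]
    have hmin := hjmin m (Finset.mem_range.mpr (by omega))
    rw [hT] at hmin
    simp only at hmin
    rw [htk, List.count_append]
    have hgoal : ((n : ℤ)) * ((w.drop j).count true + (w.take m).count true) ≤ (i : ℤ) * b := by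
      have hc' : ((w.take j).count true : ℤ) + ((w.drop j).count true : ℤ) = (b : ℤ) := by
        exact_mod_cast hcnt
      have hi' : (i : ℤ) = (n : ℤ) - j + m := by
        have : i = (n - j) + m := by omega
        rw [this]
        push_cast
        omega
      push_cast at hmin ⊢
      nlinarith [hmin, hc', hi']
    exact_mod_cast hgoal

end Max

end Stmt8Aux

/-- For coprime positive integers `a`, `b`, the lower Christoffel word `w_{a,b}` is
the lexicographically greatest Lyndon word with Parikh vector `(a, b)`. -/
theorem stmt8 {a b : ℕ} (ha : 0 < a) (hb : 0 < b) (hab : Nat.Coprime a b) :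
    Lyndon (chr a b) ∧ (chr a b).count false = a ∧ (chr a b).count true = b ∧
    ∀ w : List Bool, Lyndon w → w.count false = a → w.count true = b →
      w = chr a b ∨ List.Lex (· < ·) w (chr a b) := by
  refine ⟨Stmt8Aux.chr_lyndon ha hb hab, Stmt8Aux.chr_count_false ha hb,
    Stmt8Aux.chr_count_true ha hb, ?_⟩
  intro w hw hcf hct
  have hlen : w.length = a + b := by
    have := Stmt8Aux.count_fb w
    omega
  obtain ⟨j, hjle, hcond⟩ := Stmt8Aux.exists_rotation (a := a) hb w hlen hct
  set r := w.drop j ++ w.take j with hr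
  have hrlen : r.length = a + b := by
    rw [hr, List.length_append, List.length_drop, List.length_take, hlen]
    omega
  have hrc := Stmt8Aux.le_chr ha hb r hrlen hcond
  have hwr : w = r ∨ List.Lex (· < ·) w r := by
    by_cases hj0 : j = 0
    · left
      rw [hr, hj0]
      simp
    · by_cases hjn : w.length ≤ j
      · left
        rw [hr, List.drop_eq_nil_of_le hjn, List.take_of_length_le hjn]
        simp
      · right
        push_neg at hjn
        have hu : w.take j ≠ [] :=
          List.ne_nil_of_length_pos (by rw [List.length_take, hlen]; omega)
        have hv : w.drop j ≠ [] :=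
          List.ne_nil_of_length_pos (by rw [List.length_drop, hlen]; omega)
        have hlex := hw.2 (w.take j) (w.drop j) (List.take_append_drop j w).symm hu hv
        exact List.Lex.append_right _ _ hlex
  rcases hwr with hwr | hwr
  · rw [hwr]
    exact hrc
  · rcases hrc with hrc | hrc
    · right
      rw [← hrc]
      exact hwr
    · right
      exact List.lex_trans (fun h1 h2 => lt_trans h1 h2) hwr hrc
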